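/- Let v₀, …, v_d be affinely independent points of ℝ^d with convex hull S, let f : ℝ^d → ℝ be Lipschitz with constant λ ≥ 0 on S, let δ = max_{i,j} ‖vᵢ − vⱼ‖ be the diameter of the vertex set, and let f_l be the linear interpolant of f on S. Then |f(s) − f_l(s)| ≤ λ · √(d / (2(d+1))) · δ for all s ∈ S. -/

import Mathlib

open Finset

lemma variance_identity {E : Type*} [NormedAddCommGroup E] [InnerProductSpace ℝ E]
    {n : ℕ} (v : Fin n → E) (w : Fin n → ℝ) (hw1 : ∑ i, w i = 1) :
    ∑ i, w i * ‖(∑ j, w j • v j) - v i‖ ^ 2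
      = (1 / 2) * ∑ i, ∑ j, w i * w j * ‖v i - v j‖ ^ 2 := by
  set s : E := ∑ j, w j • v j with hs
  have hvs : ∀ x : E, (inner ℝ x s : ℝ) = ∑ j, w j * inner ℝ x (v j) := by
    intro x
    rw [hs, inner_sum]
    exact Finset.sum_congr rfl fun j _ => real_inner_smul_right x (v j) (w j)
  have hss : (inner ℝ s s : ℝ) = ∑ i, w i * ∑ j, w j * inner ℝ (v i) (v j) := by
    nth_rewrite 1 [hs]
    rw [sum_inner]
    exact Finset.sum_congr rfl fun i _ => by rw [real_inner_smul_left, hvs]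
  have lhs_eq : ∑ i, w i * ‖s - v i‖ ^ 2
      = (∑ i, w i * ‖v i‖ ^ 2) - inner ℝ s s := by
    have : ∀ i, w i * ‖s - v i‖ ^ 2
        = w i * ‖s‖ ^ 2 - 2 * (w i * inner ℝ s (v i)) + w i * ‖v i‖ ^ 2 := by
      intro i; rw [norm_sub_sq_real]; ring
    rw [Finset.sum_congr rfl fun i _ => this i]
    rw [Finset.sum_add_distrib, Finset.sum_sub_distrib, ← Finset.sum_mul, hw1,
      ← Finset.mul_sum, ← hvs, real_inner_self_eq_norm_sq]
    ring
  rw [lhs_eq]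
  have rhs_eq : ∑ i, ∑ j, w i * w j * ‖v i - v j‖ ^ 2
      = 2 * ((∑ i, w i * ‖v i‖ ^ 2) - inner ℝ s s) := by
    have : ∀ i j, w i * w j * ‖v i - v j‖ ^ 2
        = w j * (w i * ‖v i‖ ^ 2) - 2 * (w i * (w j * inner ℝ (v i) (v j)))
          + w i * (w j * ‖v j‖ ^ 2) := by
      intro i j; rw [norm_sub_sq_real]; ring
    simp_rw [this, Finset.sum_add_distrib, Finset.sum_sub_distrib,
      ← Finset.mul_sum, ← Finset.sum_mul]
    rw [hw1, ← hss]
    ring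
  rw [rhs_eq]; ring

/-- Composite form of the paper's Proposition 1, case (ii): if `f` is Lipschitz with
constant `L` on the simplex `S = conv{v₀, …, v_d}` whose vertex set has diameter
`δ = max_{i,j} ‖vᵢ − vⱼ‖`, then the linear interpolation error satisfies
`|f(s) − f_l(s)| ≤ L · √(d/(2(d+1))) · δ` on `S`. -/
theorem interpolation_error_le_lipschitz_jung_diam
    (d : ℕ) (v : Fin (d + 1) → EuclideanSpace ℝ (Fin d))
    (hv : AffineIndependent ℝ v)
    (δ : ℝ) (hδ : IsGreatest {r : ℝ | ∃ i j, r = ‖v i - v j‖} δ)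
    (f : EuclideanSpace ℝ (Fin d) → ℝ)
    (L : ℝ) (hL : 0 ≤ L)
    (hlip : ∀ x ∈ convexHull ℝ (Set.range v), ∀ y ∈ convexHull ℝ (Set.range v),
      |f x - f y| ≤ L * ‖x - y‖)
    (fl : EuclideanSpace ℝ (Fin d) →ᵃ[ℝ] ℝ)
    (hfl : ∀ i, fl (v i) = f (v i)) :
    ∀ s ∈ convexHull ℝ (Set.range v),
      |f s - fl s| ≤ L * Real.sqrt ((d : ℝ) / (2 * ((d : ℝ) + 1))) * δ := by
  intro s hs
  have hsmem := hs
  have hδ0 : 0 ≤ δ := by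
    have h0 : ‖v 0 - v 0‖ ∈ {r : ℝ | ∃ i j, r = ‖v i - v j‖} := ⟨0, 0, rfl⟩
    have := hδ.2 h0
    simpa using this
  -- obtain weights
  rw [convexHull_range_eq_exists_affineCombination] at hs
  obtain ⟨t, w₀, hw₀, hw₀1, hcomb⟩ := hs
  set w : Fin (d + 1) → ℝ := Set.indicator (↑t) w₀ with hwdef
  have hwnn : ∀ i, 0 ≤ w i := by
    intro i
    by_cases h : i ∈ t <;> simp [hwdef, Set.indicator_apply, h, hw₀ i, *]
  have hw1 : ∑ i, w i = 1 := by
    rw [hwdef, ← hw₀1]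
    rw [Finset.sum_indicator_subset w₀ (Finset.subset_univ t)]
  have hcomb' : Finset.univ.affineCombination ℝ v w = s := by
    rw [hwdef, ← Finset.affineCombination_indicator_subset w₀ v (Finset.subset_univ t), hcomb]
  have hseq : s = ∑ i, w i • v i := by
    rw [← hcomb', Finset.affineCombination_eq_linear_combination _ _ _ hw1]
  have hfls : (fl s : ℝ) = ∑ i, w i * f (v i) := by
    rw [← hcomb', Finset.map_affineCombination _ v w hw1 fl,
      Finset.affineCombination_eq_linear_combination _ _ _ hw1]
    simp [hfl, smul_eq_mul]
  have hvmem : ∀ i, v i ∈ convexHull ℝ (Set.range v) := fun i =>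
    subset_convexHull ℝ _ ⟨i, rfl⟩
  set A : ℝ := ∑ i, w i * ‖s - v i‖ with hA
  have step1 : |f s - fl s| ≤ L * A := by
    have expand : ∑ i, w i * (f s - f (v i)) = (∑ i, w i) * f s - ∑ i, w i * f (v i) := by
      simp_rw [mul_sub]
      rw [Finset.sum_sub_distrib, Finset.sum_mul]
    have key : f s - fl s = ∑ i, w i * (f s - f (v i)) := by
      rw [hfls, expand, hw1, one_mul]
    rw [key]
    calc |∑ i, w i * (f s - f (v i))| ≤ ∑ i, |w i * (f s - f (v i))| :=
          Finset.abs_sum_le_sum_abs _ _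
      _ ≤ ∑ i, w i * (L * ‖s - v i‖) := by
          refine Finset.sum_le_sum fun i _ => ?_
          rw [abs_mul, abs_of_nonneg (hwnn i)]
          exact mul_le_mul_of_nonneg_left (hlip s hsmem (v i) (hvmem i)) (hwnn i)
      _ = L * A := by rw [hA, Finset.mul_sum]; exact Finset.sum_congr rfl fun i _ => by ring
  have step2 : A ^ 2 ≤ ∑ i, w i * ‖s - v i‖ ^ 2 := by
    have := Finset.sum_sq_le_sum_mul_sum_of_sq_eq_mul Finset.univ
      (r := fun i => w i * ‖s - v i‖) (f := w) (g := fun i => w i * ‖s - v i‖ ^ 2)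
      (fun i _ => hwnn i) (fun i _ => mul_nonneg (hwnn i) (sq_nonneg _))
      (fun i _ => by ring)
    rw [hw1, one_mul] at this
    exact this
  have step3 : ∑ i, w i * ‖s - v i‖ ^ 2 ≤ (d : ℝ) / (2 * ((d : ℝ) + 1)) * δ ^ 2 := by
    rw [hseq, variance_identity v w hw1]
    have hbound : ∑ i, ∑ j, w i * w j * ‖v i - v j‖ ^ 2
        ≤ ∑ i, ∑ j, (w i * w j * δ ^ 2 - if i = j then w i * w j * δ ^ 2 else 0) := by
      refine Finset.sum_le_sum fun i _ => Finset.sum_le_sum fun j _ => ?_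
      by_cases h : i = j
      · subst h; simp
      · simp only [h, if_false, sub_zero]
        have hd : ‖v i - v j‖ ≤ δ := hδ.2 ⟨i, j, rfl⟩
        have := mul_le_mul_of_nonneg_left
          (pow_le_pow_left₀ (norm_nonneg _) hd 2) (mul_nonneg (hwnn i) (hwnn j))
        linarith
    have hsq : 1 / ((d : ℝ) + 1) ≤ ∑ i, w i ^ 2 := by
      have h := sq_sum_le_card_mul_sum_sq (s := Finset.univ) (f := w)
      rw [hw1] at h
      simp only [Finset.card_univ, Fintype.card_fin] at h
      have hd1 : (0 : ℝ) < (d : ℝ) + 1 := by positivity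
      rw [div_le_iff₀ hd1]
      calc (1 : ℝ) = 1 ^ 2 := by ring
        _ ≤ ((d + 1 : ℕ) : ℝ) * ∑ i, w i ^ 2 := by exact_mod_cast h
        _ = (∑ i, w i ^ 2) * ((d : ℝ) + 1) := by push_cast; ring
    have h1 : ∀ i : Fin (d + 1), ∑ j, w i * w j * δ ^ 2 = w i * δ ^ 2 := fun i => by
      rw [Finset.sum_congr rfl fun j _ =>
        (by ring : w i * w j * δ ^ 2 = (w i * δ ^ 2) * w j), ← Finset.mul_sum, hw1, mul_one]
    have hrhs : ∑ i, ∑ j, (w i * w j * δ ^ 2 - if i = j then w i * w j * δ ^ 2 else 0)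
        = (1 - ∑ i, w i ^ 2) * δ ^ 2 := by
      have hinner : ∀ i : Fin (d + 1),
          ∑ j, (w i * w j * δ ^ 2 - if i = j then w i * w j * δ ^ 2 else 0)
            = w i * δ ^ 2 - w i ^ 2 * δ ^ 2 := by
        intro i
        rw [Finset.sum_sub_distrib, h1 i, Finset.sum_ite_eq]
        simp only [Finset.mem_univ, if_true]
        ring
      rw [Finset.sum_congr rfl fun i _ => hinner i, Finset.sum_sub_distrib,
        ← Finset.sum_mul, ← Finset.sum_mul, hw1]
      ring
    have hfrac : (1 : ℝ) - ∑ i, w i ^ 2 ≤ (d : ℝ) / ((d : ℝ) + 1) := by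
      have hd1 : (0 : ℝ) < (d : ℝ) + 1 := by positivity
      have : (1 : ℝ) / ((d : ℝ) + 1) + (d : ℝ) / ((d : ℝ) + 1) = 1 := by field_simp; ring
      linarith
    have h2 : (1 - ∑ i, w i ^ 2) * δ ^ 2 ≤ (d : ℝ) / ((d : ℝ) + 1) * δ ^ 2 :=
      mul_le_mul_of_nonneg_right hfrac (sq_nonneg δ)
    have h3 : (d : ℝ) / ((d : ℝ) + 1) * δ ^ 2
        = 2 * ((d : ℝ) / (2 * ((d : ℝ) + 1)) * δ ^ 2) := by
      have hd1 : ((d : ℝ) + 1) ≠ 0 := by positivity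
      field_simp
    rw [hrhs] at hbound
    linarith
  have hA0 : 0 ≤ A := Finset.sum_nonneg fun i _ => mul_nonneg (hwnn i) (norm_nonneg _)
  have hAle : A ≤ Real.sqrt ((d : ℝ) / (2 * ((d : ℝ) + 1))) * δ := by
    calc A = Real.sqrt (A ^ 2) := (Real.sqrt_sq hA0).symm
      _ ≤ Real.sqrt ((d : ℝ) / (2 * ((d : ℝ) + 1)) * δ ^ 2) :=
          Real.sqrt_le_sqrt (step2.trans step3)
      _ = Real.sqrt ((d : ℝ) / (2 * ((d : ℝ) + 1))) * δ := by
          rw [Real.sqrt_mul (by positivity), Real.sqrt_sq hδ0]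
  calc |f s - fl s| ≤ L * A := step1
    _ ≤ L * (Real.sqrt ((d : ℝ) / (2 * ((d : ℝ) + 1))) * δ) :=
        mul_le_mul_of_nonneg_left hAle hL
    _ = L * Real.sqrt ((d : ℝ) / (2 * ((d : ℝ) + 1))) * δ := by ring
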